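/- arXiv:1111.1517 — 3 statements merged into one kernel-verified Lean document; each statement's English description precedes it below -/
import Mathlib

section
/- Let $G_\Gamma$ be a right-angled Artin group and let $c_{x,Y}$, $c_{y,Z}$ be partial conjugations with $v(x) \notin Z$, $v(y) \notin Y$, $v(x) \neq v(y)$, and such that at least one of the following holds: (a) $Y \cap Z = \emptyset$, or (b) $v(y)$ is adjacent to $v(x)$ in $\Gamma$. Then $c_{x,Y}$ and $c_{y,Z}$ commute: $c_{x,Y} \circ c_{y,Z} = c_{y,Z} \circ c_{x,Y}$. -/
/-- Relations for the right-angled Artin group on a simplicial graph. -/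
def raagRels {V : Type} (Γ : SimpleGraph V) : Set (FreeGroup V) :=
  {r | ∃ v w, Γ.Adj v w ∧
    r = FreeGroup.of v * FreeGroup.of w * (FreeGroup.of v)⁻¹ * (FreeGroup.of w)⁻¹}

/-- The right-angled Artin group on `Γ`. -/
abbrev RAAG {V : Type} (Γ : SimpleGraph V) : Type := PresentedGroup (raagRels Γ)

/-- The generator of `RAAG Γ` corresponding to a vertex. -/
def gen {V : Type} (Γ : SimpleGraph V) (v : V) : RAAG Γ := PresentedGroup.of v

/-- The element of `L = V ∪ V⁻¹` coded by a vertex and a sign. -/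
def lit {V : Type} (Γ : SimpleGraph V) (x : V × Bool) : RAAG Γ :=
  if x.2 then gen Γ x.1 else (gen Γ x.1)⁻¹

/-- Formal inversion on `L = V × Bool`. -/
def invL {V : Type} (x : V × Bool) : V × Bool := (x.1, !x.2)

/-- The star of a vertex. -/
def starS {V : Type} (Γ : SimpleGraph V) (v : V) : Set V := insert v (Γ.neighborSet v)

/-- The graph `Γ ∖ st(v)`: the induced graph on the complement of the star of `v`
(vertices of the star are kept but isolated). -/
def delStar {V : Type} (Γ : SimpleGraph V) (v : V) : SimpleGraph V where
  Adj a b := Γ.Adj a b ∧ a ∉ starS Γ v ∧ b ∉ starS Γ v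
  symm := ⟨fun _ _ ⟨h1, h2, h3⟩ => ⟨h1.symm, h3, h2⟩⟩
  loopless := ⟨fun a ⟨h1, _, _⟩ => Γ.loopless.irrefl a h1⟩

/-- `Y` is a nonempty union of connected components of `Γ ∖ st(v)`. -/
def IsPCDomain {V : Type} (Γ : SimpleGraph V) (v : V) (Y : Set V) : Prop :=
  Y.Nonempty ∧ (∀ y ∈ Y, y ∉ starS Γ v) ∧
    ∀ y ∈ Y, ∀ z, (delStar Γ v).Reachable y z → z ∈ Y

/-- `φ` is the partial conjugation `c_{x,Y}`: it sends each vertex of `Y` to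
`x⁻¹ y x` and fixes all other vertices. -/
def IsPartialConj {V : Type} (Γ : SimpleGraph V) (x : RAAG Γ) (Y : Set V)
    (φ : RAAG Γ ≃* RAAG Γ) : Prop :=
  (∀ w ∈ Y, φ (gen Γ w) = x⁻¹ * gen Γ w * x) ∧ (∀ w ∉ Y, φ (gen Γ w) = gen Γ w)

/-- `φ` is the type 2 Whitehead automorphism `(A, a)`.  Here `(w, true) ∈ A`
codes `w ∈ A` and `(w, false) ∈ A` codes `w⁻¹ ∈ A`. -/
def IsWhitehead {V : Type} (Γ : SimpleGraph V) (A : Set (V × Bool)) (a : V × Bool)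
    (φ : RAAG Γ ≃* RAAG Γ) : Prop :=
  φ (lit Γ a) = lit Γ a ∧ ∀ w : V, w ≠ a.1 →
    (((w, true) ∉ A ∧ (w, false) ∉ A) → φ (gen Γ w) = gen Γ w) ∧
    (((w, true) ∈ A ∧ (w, false) ∉ A) → φ (gen Γ w) = gen Γ w * lit Γ a) ∧
    (((w, true) ∉ A ∧ (w, false) ∈ A) → φ (gen Γ w) = (lit Γ a)⁻¹ * gen Γ w) ∧
    (((w, true) ∈ A ∧ (w, false) ∈ A) → φ (gen Γ w) = (lit Γ a)⁻¹ * gen Γ w * lit Γ a)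

lemma gen_commute {V : Type} (Γ : SimpleGraph V) {v w : V} (h : Γ.Adj v w) :
    Commute (gen Γ v) (gen Γ w) := by
  have hr : (FreeGroup.of v * FreeGroup.of w * (FreeGroup.of v)⁻¹ * (FreeGroup.of w)⁻¹)
      ∈ raagRels Γ := ⟨v, w, h, rfl⟩
  have h1 : (PresentedGroup.mk (raagRels Γ))
      (FreeGroup.of v * FreeGroup.of w * (FreeGroup.of v)⁻¹ * (FreeGroup.of w)⁻¹) = 1 :=
    (QuotientGroup.eq_one_iff _).mpr (Subgroup.subset_normalClosure hr)
  simp only [map_mul, map_inv] at h1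
  exact commutatorElement_eq_one_iff_commute.mp h1

lemma lit_commute {V : Type} (Γ : SimpleGraph V) {a b : V × Bool} (h : Γ.Adj a.1 b.1) :
    Commute (lit Γ a) (lit Γ b) := by
  have hc := gen_commute Γ h
  unfold lit
  rcases a with ⟨va, εa⟩; rcases b with ⟨vb, εb⟩
  cases εa <;> cases εb <;> simp <;>
    first
    | exact hc.inv_inv
    | exact hc.inv_left
    | exact hc.inv_right
    | exact hc

lemma fix_lit {V : Type} (Γ : SimpleGraph V) (φ : RAAG Γ ≃* RAAG Γ) {v : V} (ε : Bool)
    (h : φ (gen Γ v) = gen Γ v) : φ (lit Γ (v, ε)) = lit Γ (v, ε) := by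
  cases ε <;> simp [lit, h]

/-- Commuting partial conjugations: if `v(x) ∉ Z`, `v(y) ∉ Y`, `v(x) ≠ v(y)` and
either `Y ∩ Z = ∅` or `v(y)` is adjacent to `v(x)`, then `c_{x,Y}` and `c_{y,Z}`
commute. -/
theorem stmt_3 {V : Type} [Fintype V] (Γ : SimpleGraph V)
    (vx vy : V) (εx εy : Bool) (Y Z : Set V)
    (hY : IsPCDomain Γ vx Y) (hZ : IsPCDomain Γ vy Z)
    (hxZ : vx ∉ Z) (hyY : vy ∉ Y) (hne : vx ≠ vy)
    (hcase : Y ∩ Z = ∅ ∨ Γ.Adj vx vy)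
    (φ ψ : RAAG Γ ≃* RAAG Γ)
    (hφ : IsPartialConj Γ (lit Γ (vx, εx)) Y φ)
    (hψ : IsPartialConj Γ (lit Γ (vy, εy)) Z ψ) :
    φ.trans ψ = ψ.trans φ := by
  set x := lit Γ (vx, εx) with hxdef
  set y := lit Γ (vy, εy) with hydef
  have hψx : ψ x = x := fix_lit Γ ψ εx (hψ.2 vx hxZ)
  have hφy : φ y = y := fix_lit Γ φ εy (hφ.2 vy hyY)
  have key : (ψ.toMonoidHom.comp φ.toMonoidHom) = (φ.toMonoidHom.comp ψ.toMonoidHom) := by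
    apply PresentedGroup.ext
    intro w
    show ψ (φ (gen Γ w)) = φ (ψ (gen Γ w))
    by_cases hwY : w ∈ Y <;> by_cases hwZ : w ∈ Z
    · have hadj : Γ.Adj vx vy := by
        rcases hcase with h | h
        · exact absurd (Set.mem_inter hwY hwZ) (by rw [h]; exact Set.notMem_empty w)
        · exact h
      have hc : Commute x y := lit_commute Γ (a := (vx, εx)) (b := (vy, εy)) hadj
      rw [hφ.1 w hwY, map_mul, map_mul, map_inv, hψx, hψ.1 w hwZ,
        map_mul, map_mul, map_inv, hφy, hφ.1 w hwY]
      have h2 : y * x = x * y := hc.eq.symm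
      rw [show x⁻¹ * (y⁻¹ * gen Γ w * y) * x = (y * x)⁻¹ * gen Γ w * (y * x) by group,
        show y⁻¹ * (x⁻¹ * gen Γ w * x) * y = (x * y)⁻¹ * gen Γ w * (x * y) by group, h2]
    · rw [hφ.1 w hwY, map_mul, map_mul, map_inv, hψx, hψ.2 w hwZ, hφ.1 w hwY]
    · rw [hφ.2 w hwY, hψ.1 w hwZ, map_mul, map_mul, map_inv, hφy, hφ.2 w hwY]
    · rw [hφ.2 w hwY, hψ.2 w hwZ, hφ.2 w hwY]
  ext g
  exact DFunLike.congr_fun key g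
end

section
/- Let $\Gamma$ be a finite simplicial graph, $\mathcal{Z} = \bigcap_{v \in V} st(v)$, and $\Gamma'$ the full subgraph of $\Gamma$ spanned by $V \setminus \mathcal{Z}$. Assume that the center of $G_\Gamma$ is exactly the subgroup generated by $\mathcal{Z}$. Then the map sending a vertex $v \in V \setminus \mathcal{Z}$ to the inner automorphism $\omega_v : g \mapsto v^{-1} g v$ extends to a group isomorphism $G_{\Gamma'} \cong Inn(G_\Gamma)$. -/
lemma gen_comm {V : Type} {Γ : SimpleGraph V} {v w : V} (h : Γ.Adj v w) :
    Commute (gen Γ v) (gen Γ w) := by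
  rw [← commutatorElement_eq_one_iff_commute]
  have : (QuotientGroup.mk (FreeGroup.of v * FreeGroup.of w * (FreeGroup.of v)⁻¹ *
      (FreeGroup.of w)⁻¹) : RAAG Γ) = 1 := by
    rw [QuotientGroup.eq_one_iff]
    exact Subgroup.subset_normalClosure ⟨v, w, h, rfl⟩
  simpa [gen, PresentedGroup.of, commutatorElement_def] using
    PresentedGroup.one_of_mem (rels := raagRels Γ) ⟨v, w, h, rfl⟩

lemma raag_cond {V : Type} {Γ : SimpleGraph V} {G : Type*} [Group G] (f : V → G)
    (hcom : ∀ v w, Γ.Adj v w → Commute (f v) (f w)) :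
    ∀ r ∈ raagRels Γ, FreeGroup.lift f r = 1 := by
  rintro r ⟨v, w, hadj, rfl⟩
  simp only [map_mul, map_inv, FreeGroup.lift_apply_of]
  exact commutatorElement_eq_one_iff_commute.mpr (hcom v w hadj)

def raagLift {V : Type} (Γ : SimpleGraph V) {G : Type*} [Group G] (f : V → G)
    (hcom : ∀ v w, Γ.Adj v w → Commute (f v) (f w)) : RAAG Γ →* G :=
  PresentedGroup.toGroup (raag_cond f hcom)

@[simp] lemma raagLift_gen {V : Type} (Γ : SimpleGraph V) {G : Type*} [Group G] (f : V → G)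
    (hcom : ∀ v w, Γ.Adj v w → Commute (f v) (f w)) (v : V) :
    raagLift Γ f hcom (gen Γ v) = f v :=
  PresentedGroup.toGroup.of _

/-- If the center of `RAAG Γ` is the subgroup generated by `𝒵 = ⋂_v st(v)`,
then `v ↦ ω_v` (for `v ∉ 𝒵`) extends to an isomorphism from the RAAG of the
full subgraph on `V ∖ 𝒵` onto `Inn(G_Γ)`. -/
theorem stmt_9 {V : Type} [Fintype V] (Γ : SimpleGraph V)
    (hcenter : Subgroup.center (RAAG Γ) =
      Subgroup.closure (gen Γ '' {z : V | ∀ v : V, z ∈ starS Γ v})) :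
    ∃ e : RAAG (SimpleGraph.comap
        (Subtype.val : {v : V // ¬ ∀ u : V, v ∈ starS Γ u} → V) Γ) ≃*
          (MulAut.conj : RAAG Γ →* MulAut (RAAG Γ)).range,
      ∀ v : {v : V // ¬ ∀ u : V, v ∈ starS Γ u},
        (e (gen _ v) : MulAut (RAAG Γ)) = MulAut.conj ((gen Γ v.1)⁻¹) := by
  classical
  set Γ' := SimpleGraph.comap (Subtype.val : {v : V // ¬ ∀ u : V, v ∈ starS Γ u} → V) Γ with hΓ'
  set C := Subgroup.closure (gen Γ '' {z : V | ∀ v : V, z ∈ starS Γ v}) with hC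
  -- central elements
  have hCcent : ∀ x ∈ C, x ∈ Subgroup.center (RAAG Γ) := fun x hx => hcenter ▸ hx
  -- the homomorphism F : gen' v ↦ (gen v)⁻¹
  set F : RAAG Γ' →* RAAG Γ :=
    raagLift Γ' (fun v => (gen Γ v.1)⁻¹)
      (fun v w h => ((gen_comm (show Γ.Adj v.1 w.1 from h)).inv_left).inv_right) with hF
  -- P : RAAG Γ →* C × RAAG Γ'
  have hcomP : ∀ v w, Γ.Adj v w → Commute
      ((fun v => if h : ∀ u : V, v ∈ starS Γ u then
          ((⟨gen Γ v, Subgroup.subset_closure ⟨v, h, rfl⟩⟩ : C), (1 : RAAG Γ'))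
        else (1, (gen Γ' ⟨v, h⟩)⁻¹)) v)
      ((fun v => if h : ∀ u : V, v ∈ starS Γ u then
          ((⟨gen Γ v, Subgroup.subset_closure ⟨v, h, rfl⟩⟩ : C), (1 : RAAG Γ'))
        else (1, (gen Γ' ⟨v, h⟩)⁻¹)) w) := by
    intro v w hadj
    beta_reduce
    by_cases hv : ∀ u : V, v ∈ starS Γ u <;> by_cases hw : ∀ u : V, w ∈ starS Γ u
    · rw [dif_pos hv, dif_pos hw]
      refine Commute.prod ?_ (Commute.one_right _)
      rw [Commute, SemiconjBy, Subtype.ext_iff]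
      exact gen_comm hadj
    · rw [dif_pos hv, dif_neg hw]
      exact Commute.prod (Commute.one_right _) (Commute.one_left _)
    · rw [dif_neg hv, dif_pos hw]
      exact Commute.prod (Commute.one_left _) (Commute.one_right _)
    · rw [dif_neg hv, dif_neg hw]
      refine Commute.prod (Commute.one_left _) ?_
      exact ((gen_comm (show Γ'.Adj ⟨v, hv⟩ ⟨w, hw⟩ from hadj)).inv_left).inv_right
  set P : RAAG Γ →* C × RAAG Γ' := raagLift Γ _ hcomP with hP
  -- M : C × RAAG Γ' →* RAAG Γ
  have hcomM : ∀ (c : C) (y : RAAG Γ'), Commute (C.subtype c) (F y) := by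
    intro c y
    exact (Subgroup.mem_center_iff.mp (hCcent c.1 c.2) (F y)).symm
  set M : (C × RAAG Γ') →* RAAG Γ := (C.subtype).noncommCoprod F hcomM with hM
  -- M ∘ P = id
  have hMP : M.comp P = MonoidHom.id (RAAG Γ) := by
    apply PresentedGroup.ext
    intro v
    show M (P (gen Γ v)) = gen Γ v
    rw [hP, raagLift_gen]
    by_cases hv : ∀ u : V, v ∈ starS Γ u
    · rw [dif_pos hv]
      simp [hM, MonoidHom.noncommCoprod_apply]
    · rw [dif_neg hv]
      simp [hM, MonoidHom.noncommCoprod_apply, hF]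
  -- g'' : RAAG Γ →* RAAG Γ'
  set g'' : RAAG Γ →* RAAG Γ' := (MonoidHom.snd _ _).comp P with hg''
  have hg''gen : ∀ v : V, g'' (gen Γ v) =
      if h : ∀ u : V, v ∈ starS Γ u then 1 else (gen Γ' ⟨v, h⟩)⁻¹ := by
    intro v
    rw [hg'', MonoidHom.comp_apply, hP, raagLift_gen]
    by_cases hv : ∀ u : V, v ∈ starS Γ u
    · rw [dif_pos hv, dif_pos hv]; rfl
    · rw [dif_neg hv, dif_neg hv]; rfl
  -- kernel of g'' is central
  have hker_cent : ∀ x : RAAG Γ, g'' x = 1 → x ∈ Subgroup.center (RAAG Γ) := by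
    intro x hx
    have h1 : x = M (P x) := (DFunLike.ext_iff.mp hMP x).symm
    have h2 : (P x).2 = g'' x := rfl
    rw [hM, MonoidHom.noncommCoprod_apply, h2, hx, map_one, mul_one] at h1
    exact h1 ▸ hCcent _ (P x).1.2
  -- center → ker conj  and  ker conj → center
  have hcent_conj : ∀ x : RAAG Γ, x ∈ Subgroup.center (RAAG Γ) →
      MulAut.conj x = 1 := by
    intro x hx
    ext g
    rw [MulAut.conj_apply, MulAut.one_apply, mul_inv_eq_iff_eq_mul]
    exact (Subgroup.mem_center_iff.mp hx g).symm
  have hconj_cent : ∀ x : RAAG Γ, MulAut.conj x = 1 →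
      x ∈ Subgroup.center (RAAG Γ) := by
    intro x hx
    rw [Subgroup.mem_center_iff]
    intro g
    have : MulAut.conj x g = (1 : MulAut (RAAG Γ)) g := by rw [hx]
    rw [MulAut.conj_apply, MulAut.one_apply, mul_inv_eq_iff_eq_mul] at this
    exact this.symm
  -- the quotient lift
  have hker_lift : ∀ x ∈ (MulAut.conj : RAAG Γ →* MulAut (RAAG Γ)).ker, g'' x = 1 := by
    intro x hx
    have hxC : x ∈ C := hcenter ▸ hconj_cent x (MonoidHom.mem_ker.mp hx)
    have hle : C ≤ g''.ker := by
      rw [hC, Subgroup.closure_le]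
      rintro _ ⟨z, hz, rfl⟩
      rw [SetLike.mem_coe, MonoidHom.mem_ker, hg''gen z]
      exact dif_pos hz
    exact hle hxC
  set lift : (RAAG Γ ⧸ (MulAut.conj : RAAG Γ →* MulAut (RAAG Γ)).ker) →* RAAG Γ' :=
    QuotientGroup.lift _ g'' (fun x hx => MonoidHom.mem_ker.mpr (hker_lift x hx)) with hlift
  set E := QuotientGroup.quotientKerEquivRange (MulAut.conj : RAAG Γ →* MulAut (RAAG Γ))
    with hE
  set gbar : (MulAut.conj : RAAG Γ →* MulAut (RAAG Γ)).range →* RAAG Γ' :=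
    lift.comp E.symm.toMonoidHom with hgbar
  set f : RAAG Γ' →* (MulAut.conj : RAAG Γ →* MulAut (RAAG Γ)).range :=
    MonoidHom.codRestrict ((MulAut.conj : RAAG Γ →* MulAut (RAAG Γ)).comp F) _
      (fun x => ⟨F x, rfl⟩) with hf
  -- E at mk
  have hEmk : ∀ y : RAAG Γ, E (QuotientGroup.mk y) =
      ⟨MulAut.conj y, ⟨y, rfl⟩⟩ := by
    intro y
    apply Subtype.ext
    rfl
  have hEsymm : ∀ (y : RAAG Γ) (h : MulAut.conj y ∈
      (MulAut.conj : RAAG Γ →* MulAut (RAAG Γ)).range),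
      E.symm ⟨MulAut.conj y, h⟩ = QuotientGroup.mk y := by
    intro y h
    rw [MulEquiv.symm_apply_eq, hEmk]
  -- gbar ∘ f = id
  have h₁ : gbar.comp f = MonoidHom.id (RAAG Γ') := by
    apply PresentedGroup.ext
    intro v
    show gbar (f (gen Γ' v)) = gen Γ' v
    have hfv : f (gen Γ' v) = ⟨MulAut.conj ((gen Γ v.1)⁻¹), MonoidHom.mem_range.mpr ⟨(gen Γ v.1)⁻¹, rfl⟩⟩ := by
      apply Subtype.ext
      simp [hf, hF]
    rw [hfv, hgbar, MonoidHom.comp_apply, MulEquiv.coe_toMonoidHom, hEsymm, hlift,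
      QuotientGroup.lift_mk']
    rw [map_inv, hg''gen, dif_neg v.2]
    simp
  -- gbar injective
  have hginj : Function.Injective gbar := by
    rw [injective_iff_map_eq_one]
    intro y hy
    obtain ⟨q, rfl⟩ := E.surjective y
    induction q using QuotientGroup.induction_on with
    | H x =>
      rw [hgbar, MonoidHom.comp_apply, MulEquiv.coe_toMonoidHom, MulEquiv.symm_apply_apply,
        hlift, QuotientGroup.lift_mk'] at hy
      have hxc : x ∈ (MulAut.conj : RAAG Γ →* MulAut (RAAG Γ)).ker :=
        MonoidHom.mem_ker.mpr (hcent_conj x (hker_cent x hy))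
      rw [show (QuotientGroup.mk x : RAAG Γ ⧸ _) = 1 from
        (QuotientGroup.eq_one_iff x).mpr hxc, map_one]
  -- f ∘ gbar = id
  have h₂ : f.comp gbar = MonoidHom.id _ := by
    apply MonoidHom.ext
    intro y
    apply hginj
    have := DFunLike.ext_iff.mp h₁ (gbar y)
    simpa using this
  refine ⟨MonoidHom.toMulEquiv f gbar h₁ h₂, ?_⟩
  intro v
  show ((f (gen Γ' v) : (MulAut.conj : RAAG Γ →* MulAut (RAAG Γ)).range) : MulAut (RAAG Γ))
      = MulAut.conj ((gen Γ v.1)⁻¹)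
  simp [hf, hF]
end

section
/- Let $\Gamma$ be a finite simplicial graph, $(A,a)$ a type 2 Whitehead automorphism of $G_\Gamma$, and $b \in L$ with $b \notin A$ and $b^{-1} \notin A$. Then $(A,a)$ commutes with the inner automorphism $\omega_b = (L - lk_L(b) - b^{-1}, b)$ given by conjugation by $b$: $(A,a) \circ \omega_b \circ (A,a)^{-1} = \omega_b$. -/
/-- If `b ∉ A` and `b⁻¹ ∉ A`, the type 2 Whitehead automorphism `(A,a)`
commutes with the inner automorphism `ω_b : g ↦ b⁻¹ g b`. -/
theorem stmt_13 {V : Type} [Fintype V] (Γ : SimpleGraph V)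
    (A : Set (V × Bool)) (a b : V × Bool)
    (haA : a ∈ A) (haA' : invL a ∉ A) (hbA : b ∉ A) (hbA' : invL b ∉ A)
    (φ : MulAut (RAAG Γ)) (hφ : IsWhitehead Γ A a φ) :
    φ * MulAut.conj ((lit Γ b)⁻¹) * φ⁻¹ = MulAut.conj ((lit Γ b)⁻¹) := by
  have hb1 : b.1 ≠ a.1 := by
    intro h
    rcases Bool.eq_or_eq_not b.2 a.2 with hs | hs
    · exact hbA (by rw [show b = a from Prod.ext h hs]; exact haA)
    · exact hbA' (by
        have : invL b = a := Prod.ext h (by simp [invL, hs])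
        rw [this]; exact haA)
  have hgen : φ (gen Γ b.1) = gen Γ b.1 := by
    apply ((hφ.2 b.1 hb1).1)
    constructor
    · intro h; cases hb : b.2
      · exact hbA' (by simpa [invL, hb] using h)
      · exact hbA (by rw [show b = (b.1, true) from Prod.ext rfl hb]; exact h)
    · intro h; cases hb : b.2
      · exact hbA (by rw [show b = (b.1, false) from Prod.ext rfl hb]; exact h)
      · exact hbA' (by simpa [invL, hb] using h)
  have hlit : φ (lit Γ b) = lit Γ b := by
    unfold lit
    cases b.2 <;> simp [hgen]
  ext g
  simp only [MulAut.mul_apply, MulAut.conj_apply]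
  rw [map_mul, map_mul, map_inv, map_inv, map_inv, hlit,
    MulAut.apply_inv_self]
end
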